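/- In the 29-voter election over {a,b,c,d} with 2 voters a≻b≻c≻d, 2 voters a≻c≻d≻b, 1 voter a≻b≻d≻c, 8 voters b≻c≻a≻d, 8 voters c≻d≻a≻b, and 8 voters d≻b≻a≻c, the replacement score of candidate a is at most 3: replacing one b-voter, one c-voter, and one d-voter with voters who rank a first makes a the Condorcet winner. -/

import Mathlib

/-- Number of voters preferring `a` to `b`. -/
noncomputable def countPref {V C : Type*} [Fintype V] (O : V → C → C → Prop) (a b : C) : ℕ :=
  Nat.card {i : V // O i a b}

/-- `c` is a Condorcet winner: a strict majority of voters prefers `c` to every other candidate. -/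
def IsCondorcetWinner {V C : Type*} [Fintype V] (O : V → C → C → Prop) (c : C) : Prop :=
  ∀ b : C, b ≠ c → Fintype.card V < 2 * countPref O c b

/-- Candidates `a=0`, `b=1`, `c=2`, `d=3`. The ballot (ranking, best first) of each of
the 29 voters: 2 voters a≻b≻c≻d, 2 voters a≻c≻d≻b, 1 voter a≻b≻d≻c, 8 voters b≻c≻a≻d,
8 voters c≻d≻a≻b, and 8 voters d≻b≻a≻c. -/
def theBallot (i : Fin 29) : List (Fin 4) :=
  if i.val < 2 then [0, 1, 2, 3]
  else if i.val < 4 then [0, 2, 3, 1]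
  else if i.val < 5 then [0, 1, 3, 2]
  else if i.val < 13 then [1, 2, 0, 3]
  else if i.val < 21 then [2, 3, 0, 1]
  else [3, 1, 0, 2]

/-- The preference profile of the 29-voter election: voter `i` prefers `x` to `y` iff
`x` occurs before `y` on voter `i`'s ballot. -/
def theProfile (i : Fin 29) (x y : Fin 4) : Prop :=
  (theBallot i).idxOf x < (theBallot i).idxOf y

/-- `c` becomes the Condorcet winner after changing the votes of at most `k` voters. -/
def ReplacementScoreLE (c : Fin 4) (k : ℕ) : Prop :=
  ∃ O' : Fin 29 → Fin 4 → Fin 4 → Prop,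
    (∀ i, IsStrictTotalOrder (Fin 4) (O' i)) ∧
    Nat.card {i : Fin 29 // O' i ≠ theProfile i} ≤ k ∧
    IsCondorcetWinner O' c

/-- `c` is the Condorcet winner after deleting the voters in `D`. -/
def WinsAfterDeleting (D : Finset (Fin 29)) (c : Fin 4) : Prop :=
  IsCondorcetWinner (fun i : {i : Fin 29 // i ∉ D} => theProfile i.1) c


def newBallot (i : Fin 29) : List (Fin 4) :=
  if i.val = 5 ∨ i.val = 13 ∨ i.val = 21 then [0, 1, 2, 3] else theBallot i

def Onew (i : Fin 29) (x y : Fin 4) : Prop :=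
  (newBallot i).idxOf x < (newBallot i).idxOf y

instance (i : Fin 29) (x y : Fin 4) : Decidable (Onew i x y) :=
  inferInstanceAs (Decidable (_ < _))

lemma Onew_tri : ∀ i x y, Onew i x y ∨ x = y ∨ Onew i y x := by decide

lemma Onew_irrefl : ∀ i x, ¬ Onew i x x := by decide

lemma Onew_trans : ∀ i x y z, Onew i x y → Onew i y z → Onew i x z := by decide

lemma newBallot_eq (i : Fin 29) (h : i ∉ ({5, 13, 21} : Finset (Fin 29))) :
    newBallot i = theBallot i := by
  simp only [Finset.mem_insert, Finset.mem_singleton, not_or] at h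
  have h5 : i.val ≠ 5 := fun hv => h.1 (Fin.ext hv)
  have h13 : i.val ≠ 13 := fun hv => h.2.1 (Fin.ext hv)
  have h21 : i.val ≠ 21 := fun hv => h.2.2 (Fin.ext hv)
  simp [newBallot, h5, h13, h21]

/-- the replacement score of candidate `a` (candidate 0) is at most 3:
replacing one b-voter (voter 5), one c-voter (voter 13) and one d-voter (voter 21)
with voters who rank `a` first makes `a` the Condorcet winner. -/
theorem stmt15 :
    ∃ O' : Fin 29 → Fin 4 → Fin 4 → Prop,
      (∀ i, IsStrictTotalOrder (Fin 4) (O' i)) ∧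
      (∀ i : Fin 29, i ∉ ({5, 13, 21} : Finset (Fin 29)) → O' i = theProfile i) ∧
      (∀ i ∈ ({5, 13, 21} : Finset (Fin 29)), ∀ y : Fin 4, y ≠ 0 → O' i 0 y) ∧
      IsCondorcetWinner O' 0 := by
  refine ⟨Onew, fun i => @IsStrictTotalOrder.mk _ _ ⟨fun a b h1 h2 => ((Onew_tri i a b).resolve_left h1).resolve_right h2⟩ (@IsStrictOrder.mk _ _ ⟨Onew_irrefl i⟩ ⟨Onew_trans i⟩), ?_, ?_, ?_⟩
  · intro i hi
    funext x y
    simp only [Onew, theProfile, newBallot_eq i hi]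
  · intro i hi y hy
    fin_cases hi <;> revert hy <;> revert y <;> decide
  · intro b hb
    simp only [countPref, Nat.card_eq_fintype_card]
    revert hb; revert b; decide
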